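/- Assume in addition 0 < s < 1 < q and let μ > 0. Set ζ_μ = [s(1−s)/(q(q−s))]^(1/(q−s))·μ^(1/(q−s)), C̃ = 1 + q(q−s)/(s(1−s)) and c̃ = 1 + s(1−s)/(q(q−s)). Then for every ζ ∈ ℝ one has |ζ|^(q+1) ≤ g_μ(ζ)·ζ; moreover g_μ(ζ)·ζ ≤ C̃·|ζ|^(q+1) whenever |ζ| ≥ ζ_μ, and g_μ(ζ)·ζ ≤ μ·c̃·|ζ|^(s+1) whenever |ζ| ≤ ζ_μ. -/
import Mathlib


open Real

noncomputable def g (s q μ ζ : ℝ) : ℝ := μ * |ζ| ^ (s - 1) * ζ + |ζ| ^ (q - 1) * ζ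

theorem stmt_13 (s q : ℝ) (hs : 0 < s) (hs1 : s < 1) (hq : 1 < q)
    (μ : ℝ) (hμ : 0 < μ) :
    ∀ ζ : ℝ,
      |ζ| ^ (q + 1) ≤ g s q μ ζ * ζ ∧
      ((s * (1 - s) / (q * (q - s))) ^ ((1 : ℝ) / (q - s)) * μ ^ ((1 : ℝ) / (q - s)) ≤ |ζ| →
        g s q μ ζ * ζ ≤ (1 + q * (q - s) / (s * (1 - s))) * |ζ| ^ (q + 1)) ∧
      (|ζ| ≤ (s * (1 - s) / (q * (q - s))) ^ ((1 : ℝ) / (q - s)) * μ ^ ((1 : ℝ) / (q - s)) →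
        g s q μ ζ * ζ ≤ μ * (1 + s * (1 - s) / (q * (q - s))) * |ζ| ^ (s + 1)) := by
  intro ζ
  have hqs : 0 < q - s := by linarith
  have hq0 : 0 < q := by linarith
  have hA : 0 < s * (1 - s) / (q * (q - s)) := div_pos (by nlinarith) (by nlinarith)
  set A := s * (1 - s) / (q * (q - s)) with hAdef
  have hx : 0 ≤ |ζ| := abs_nonneg ζ
  have hsq : |ζ| ^ (q - s) * |ζ| ^ (s + 1) = |ζ| ^ (q + 1) := by
    rw [← Real.rpow_add' hx (by linarith)]
    ring_nf
  have key : g s q μ ζ * ζ = μ * |ζ| ^ (s + 1) + |ζ| ^ (q + 1) := by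
    rcases eq_or_ne ζ 0 with h0 | h0
    · simp [g, h0, Real.zero_rpow (by linarith : s + 1 ≠ 0),
        Real.zero_rpow (by linarith : q + 1 ≠ 0)]
    · have hxp : 0 < |ζ| := abs_pos.mpr h0
      have h2 : ζ * ζ = |ζ| ^ (2 : ℝ) := by
        rw [show (2 : ℝ) = ((2 : ℕ) : ℝ) by norm_num, Real.rpow_natCast, sq_abs, sq]
      have e1 : |ζ| ^ (s - 1) * |ζ| ^ (2 : ℝ) = |ζ| ^ (s + 1) := by
        rw [← Real.rpow_add hxp]; ring_nf
      have e2 : |ζ| ^ (q - 1) * |ζ| ^ (2 : ℝ) = |ζ| ^ (q + 1) := by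
        rw [← Real.rpow_add hxp]; ring_nf
      calc g s q μ ζ * ζ = μ * (|ζ| ^ (s - 1) * (ζ * ζ)) + |ζ| ^ (q - 1) * (ζ * ζ) := by
            simp [g]; ring
        _ = μ * |ζ| ^ (s + 1) + |ζ| ^ (q + 1) := by rw [h2, e1, e2]
  have hs1pos : (0 : ℝ) ≤ |ζ| ^ (s + 1) := Real.rpow_nonneg hx _
  have hq1pos : (0 : ℝ) ≤ |ζ| ^ (q + 1) := Real.rpow_nonneg hx _
  refine ⟨by nlinarith, ?_, ?_⟩
  · intro hζ
    rw [← Real.mul_rpow hA.le hμ.le] at hζ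
    have hAμ : 0 < A * μ := mul_pos hA hμ
    have h1 : A * μ ≤ |ζ| ^ (q - s) := by
      have := Real.rpow_le_rpow (Real.rpow_nonneg hAμ.le _) hζ hqs.le
      rwa [← Real.rpow_mul hAμ.le, one_div, inv_mul_cancel₀ hqs.ne', Real.rpow_one] at this
    have h2 : μ * |ζ| ^ (s + 1) ≤ A⁻¹ * |ζ| ^ (q - s) * |ζ| ^ (s + 1) := by
      have : μ ≤ A⁻¹ * |ζ| ^ (q - s) := by
        have h3 := mul_le_mul_of_nonneg_left h1 (inv_nonneg.mpr hA.le)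
        rwa [← mul_assoc, inv_mul_cancel₀ hA.ne', one_mul] at h3
      exact mul_le_mul_of_nonneg_right this hs1pos
    rw [key]
    calc μ * |ζ| ^ (s + 1) + |ζ| ^ (q + 1)
        ≤ A⁻¹ * (|ζ| ^ (q - s) * |ζ| ^ (s + 1)) + |ζ| ^ (q + 1) := by linarith [h2]
      _ = (1 + A⁻¹) * |ζ| ^ (q + 1) := by rw [hsq]; ring
      _ = (1 + q * (q - s) / (s * (1 - s))) * |ζ| ^ (q + 1) := by
          rw [hAdef]
          congr 1
          rw [inv_div]
  · intro hζ
    rw [← Real.mul_rpow hA.le hμ.le] at hζ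
    have hAμ : 0 < A * μ := mul_pos hA hμ
    have h1 : |ζ| ^ (q - s) ≤ A * μ := by
      have := Real.rpow_le_rpow hx hζ hqs.le
      rwa [← Real.rpow_mul hAμ.le, one_div, inv_mul_cancel₀ hqs.ne', Real.rpow_one] at this
    have h2 : |ζ| ^ (q + 1) ≤ A * μ * |ζ| ^ (s + 1) := by
      rw [← hsq]
      exact mul_le_mul_of_nonneg_right h1 hs1pos
    rw [key]
    nlinarith [h2]
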